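/- The set of minimal elements $(B_l)_{\min}=\{b\in B_l : \langle c,\varepsilon(b)\rangle=l\}$ equals $\{(\alpha,\beta,\beta,\beta,\beta,\alpha) : \alpha,\beta\in\mathbb{Z}_{\ge0},\ 2\alpha+3\beta\le l\}$, and for $b=(\alpha,\beta,\beta,\beta,\beta,\alpha)$ the maps satisfy $\varepsilon(b)=\varphi(b)=(l-2\alpha-3\beta)\Lambda_0+\alpha\Lambda_1+\beta\Lambda_2$; consequently $\varepsilon$ restricted to $(B_l)_{\min}$ is a bijection onto $(P_{cl}^+)_l=\{k_0\Lambda_0+k_1\Lambda_1+k_2\Lambda_2 : k_i\in\mathbb{Z}_{\ge0},\ k_0+2k_1+3k_2=l\}$. -/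
import Mathlib


/-- An element `(x₁,x₂,x₃,x̄₃,x̄₂,x̄₁)` (fields `x1 x2 x3 y3 y2 y1`). -/
structure C6 where
  x1 : ℤ
  x2 : ℤ
  x3 : ℤ
  y3 : ℤ
  y2 : ℤ
  y1 : ℤ
deriving DecidableEq

attribute [local instance] Classical.propDecidable

noncomputable section

/-- Membership in `B_{≥0}`: all coordinates nonnegative and `x₃ ≡ x̄₃ (mod 2)`. -/
def memB (b : C6) : Prop :=
  0 ≤ b.x1 ∧ 0 ≤ b.x2 ∧ 0 ≤ b.x3 ∧ 0 ≤ b.y3 ∧ 0 ≤ b.y2 ∧ 0 ≤ b.y1 ∧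
    b.x3 % 2 = b.y3 % 2

/-- Return `some b` if all coordinates are nonnegative, else `none` (i.e. `0`). -/
def chk (b : C6) : Option C6 :=
  if 0 ≤ b.x1 ∧ 0 ≤ b.x2 ∧ 0 ≤ b.x3 ∧ 0 ≤ b.y3 ∧ 0 ≤ b.y2 ∧ 0 ≤ b.y1 then some b
  else none

def zz1 (b : C6) : ℤ := b.y1 - b.x1
def zz2 (b : C6) : ℤ := b.y2 - b.y3
def zz3 (b : C6) : ℤ := b.x3 - b.x2
def zz4 (b : C6) : ℤ := (b.y3 - b.x3) / 2

def F1c (b : C6) : Prop :=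
  zz1 b + zz2 b + zz3 b + 3 * zz4 b ≤ 0 ∧ zz1 b + zz2 b + 3 * zz4 b ≤ 0 ∧
    zz1 b + zz2 b ≤ 0 ∧ zz1 b ≤ 0
def F2c (b : C6) : Prop :=
  zz1 b + zz2 b + zz3 b + 3 * zz4 b ≤ 0 ∧ zz2 b + 3 * zz4 b ≤ 0 ∧
    zz2 b ≤ 0 ∧ 0 < zz1 b
def F3c (b : C6) : Prop :=
  zz1 b + zz3 b + 3 * zz4 b ≤ 0 ∧ zz3 b + 3 * zz4 b ≤ 0 ∧ zz4 b ≤ 0 ∧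
    0 < zz2 b ∧ 0 < zz1 b + zz2 b
def F4c (b : C6) : Prop :=
  0 < zz1 b + zz2 b + 3 * zz4 b ∧ 0 < zz2 b + 3 * zz4 b ∧ 0 < zz4 b ∧
    zz3 b ≤ 0 ∧ zz1 b + zz3 b ≤ 0
def F5c (b : C6) : Prop :=
  0 < zz1 b + zz2 b + zz3 b + 3 * zz4 b ∧ 0 < zz3 b + 3 * zz4 b ∧
    0 < zz3 b ∧ zz1 b ≤ 0
def F6c (b : C6) : Prop :=
  0 < zz1 b + zz2 b + zz3 b + 3 * zz4 b ∧ 0 < zz1 b + zz3 b + 3 * zz4 b ∧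
    0 < zz1 b + zz3 b ∧ 0 < zz1 b

def E1c (b : C6) : Prop :=
  zz1 b + zz2 b + zz3 b + 3 * zz4 b < 0 ∧ zz1 b + zz2 b + 3 * zz4 b < 0 ∧
    zz1 b + zz2 b < 0 ∧ zz1 b < 0
def E2c (b : C6) : Prop :=
  zz1 b + zz2 b + zz3 b + 3 * zz4 b < 0 ∧ zz2 b + 3 * zz4 b < 0 ∧
    zz2 b < 0 ∧ 0 ≤ zz1 b
def E3c (b : C6) : Prop :=
  zz1 b + zz3 b + 3 * zz4 b < 0 ∧ zz3 b + 3 * zz4 b < 0 ∧ zz4 b < 0 ∧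
    0 ≤ zz2 b ∧ 0 ≤ zz1 b + zz2 b
def E4c (b : C6) : Prop :=
  0 ≤ zz1 b + zz2 b + 3 * zz4 b ∧ 0 ≤ zz2 b + 3 * zz4 b ∧ 0 ≤ zz4 b ∧
    zz3 b < 0 ∧ zz1 b + zz3 b < 0
def E5c (b : C6) : Prop :=
  0 ≤ zz1 b + zz2 b + zz3 b + 3 * zz4 b ∧ 0 ≤ zz3 b + 3 * zz4 b ∧
    0 ≤ zz3 b ∧ zz1 b < 0
def E6c (b : C6) : Prop :=
  0 ≤ zz1 b + zz2 b + zz3 b + 3 * zz4 b ∧ 0 ≤ zz1 b + zz3 b + 3 * zz4 b ∧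
    0 ≤ zz1 b + zz3 b ∧ 0 ≤ zz1 b

/-- The operator `f̃₀` on `B_{≥0}`, given by the six cases `(F₁)–(F₆)`. -/
def f0op (b : C6) : Option C6 :=
  if F1c b then chk ⟨b.x1 + 1, b.x2, b.x3, b.y3, b.y2, b.y1⟩
  else if F2c b then chk ⟨b.x1, b.x2, b.x3 + 1, b.y3 + 1, b.y2, b.y1 - 1⟩
  else if F3c b then chk ⟨b.x1, b.x2, b.x3 + 2, b.y3, b.y2 - 1, b.y1⟩
  else if F4c b then chk ⟨b.x1, b.x2 + 1, b.x3, b.y3 - 2, b.y2, b.y1⟩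
  else if F5c b then chk ⟨b.x1 + 1, b.x2, b.x3 - 1, b.y3 - 1, b.y2, b.y1⟩
  else if F6c b then chk ⟨b.x1, b.x2, b.x3, b.y3, b.y2, b.y1 - 1⟩
  else none

/-- The operator `ẽ₀` on `B_{≥0}`, given by the six cases `(E₁)–(E₆)`. -/
def e0op (b : C6) : Option C6 :=
  if E1c b then chk ⟨b.x1 - 1, b.x2, b.x3, b.y3, b.y2, b.y1⟩
  else if E2c b then chk ⟨b.x1, b.x2, b.x3 - 1, b.y3 - 1, b.y2, b.y1 + 1⟩
  else if E3c b then chk ⟨b.x1, b.x2, b.x3 - 2, b.y3, b.y2 + 1, b.y1⟩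
  else if E4c b then chk ⟨b.x1, b.x2 - 1, b.x3, b.y3 + 2, b.y2, b.y1⟩
  else if E5c b then chk ⟨b.x1 - 1, b.x2, b.x3 + 1, b.y3 + 1, b.y2, b.y1⟩
  else if E6c b then chk ⟨b.x1, b.x2, b.x3, b.y3, b.y2, b.y1 + 1⟩
  else none

/-- `s(b) = x₁+x₂+(x₃+x̄₃)/2+x̄₂+x̄₁`. -/
def sB (b : C6) : ℤ := b.x1 + b.x2 + (b.x3 + b.y3) / 2 + b.y2 + b.y1

/-- `max A` for `A = (0, z₁, z₁+z₂, z₁+z₂+3z₄, z₁+z₂+z₃+3z₄, 2z₁+z₂+z₃+3z₄)`. -/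
def maxA (b : C6) : ℤ :=
  max 0 (max (zz1 b) (max (zz1 b + zz2 b) (max (zz1 b + zz2 b + 3 * zz4 b)
    (max (zz1 b + zz2 b + zz3 b + 3 * zz4 b)
      (2 * zz1 b + zz2 b + zz3 b + 3 * zz4 b)))))

def phi0 (l : ℤ) (b : C6) : ℤ := l - sB b + maxA b

def eps0 (l : ℤ) (b : C6) : ℤ :=
  l - sB b + maxA b - (2 * zz1 b + zz2 b + zz3 b + 3 * zz4 b)

def eps1 (b : C6) : ℤ := b.y1 + max (b.y3 - b.y2 + max (b.x2 - b.x3) 0) 0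
def phi1 (b : C6) : ℤ := b.x1 + max (b.x3 - b.x2 + max (b.y2 - b.y3) 0) 0
def eps2 (b : C6) : ℤ := b.y2 + max (b.x3 - b.y3) 0 / 2
def phi2 (b : C6) : ℤ := b.x2 + max (b.y3 - b.x3) 0 / 2

set_option maxHeartbeats 2000000 in
private lemma key_min (l : ℤ) (b : C6) (hb : memB b) :
    eps0 l b + 2 * eps1 b + 3 * eps2 b = l ↔
      (b.x1 = b.y1 ∧ b.x2 = b.x3 ∧ b.x2 = b.y3 ∧ b.x2 = b.y2) := by
  obtain ⟨h1, h2, h3, h4, h5, h6, hp⟩ := hb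
  simp only [eps0, eps1, eps2, sB, maxA, zz1, zz2, zz3, zz4]
  omega

private lemma vals (l a c : ℤ) :
    eps0 l ⟨a, c, c, c, c, a⟩ = l - 2 * a - 3 * c ∧
      eps1 ⟨a, c, c, c, c, a⟩ = a ∧ eps2 ⟨a, c, c, c, c, a⟩ = c ∧
      phi0 l ⟨a, c, c, c, c, a⟩ = l - 2 * a - 3 * c ∧
      phi1 ⟨a, c, c, c, c, a⟩ = a ∧ phi2 ⟨a, c, c, c, c, a⟩ = c := by
  simp only [eps0, eps1, eps2, phi0, phi1, phi2, sB, maxA, zz1, zz2, zz3, zz4]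
  omega

private lemma setEq (l : ℤ) :
    {b : C6 | (memB b ∧ sB b ≤ l) ∧ eps0 l b + 2 * eps1 b + 3 * eps2 b = l}
      = {b : C6 | ∃ a c : ℤ, 0 ≤ a ∧ 0 ≤ c ∧ 2 * a + 3 * c ≤ l ∧
          b = ⟨a, c, c, c, c, a⟩} := by
  ext b
  simp only [Set.mem_setOf_eq]
  constructor
  · rintro ⟨⟨hb, hs⟩, he⟩
    obtain ⟨e1, e2, e3, e4⟩ := (key_min l b hb).mp he
    obtain ⟨h1, h2, h3, h4, h5, h6, hp⟩ := hb
    obtain ⟨x1, x2, x3, y3, y2, y1⟩ := b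
    simp only [sB] at hs
    dsimp only at e1 e2 e3 e4 h1 h2 h3 h4 h5 h6 hp hs
    refine ⟨x1, x2, h1, h2, by omega, ?_⟩
    simp only [C6.mk.injEq, true_and, and_true]
    omega
  · rintro ⟨a, c, ha, hc, hle, rfl⟩
    have hm : memB (⟨a, c, c, c, c, a⟩ : C6) := ⟨ha, hc, hc, hc, hc, ha, rfl⟩
    refine ⟨⟨hm, ?_⟩, (key_min l _ hm).mpr ⟨rfl, rfl, rfl, rfl⟩⟩
    simp only [sB]; omega

/-- The minimal elements of `B_l` are exactly `(α,β,β,β,β,α)` with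
`2α+3β ≤ l`; on them `ε = φ = (l-2α-3β)Λ₀ + αΛ₁ + βΛ₂`, and `ε` is a bijection
from `(B_l)_min` onto the level-`l` dominant weights
`{(k₀,k₁,k₂) : kᵢ ≥ 0, k₀+2k₁+3k₂ = l}`. -/

theorem minimal_elements (l : ℤ) (hl : 0 < l) :
    {b : C6 | (memB b ∧ sB b ≤ l) ∧ eps0 l b + 2 * eps1 b + 3 * eps2 b = l}
      = {b : C6 | ∃ a c : ℤ, 0 ≤ a ∧ 0 ≤ c ∧ 2 * a + 3 * c ≤ l ∧
          b = ⟨a, c, c, c, c, a⟩} ∧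
    (∀ a c : ℤ, 0 ≤ a → 0 ≤ c → 2 * a + 3 * c ≤ l →
      (eps0 l ⟨a, c, c, c, c, a⟩ = l - 2 * a - 3 * c ∧
       eps1 ⟨a, c, c, c, c, a⟩ = a ∧ eps2 ⟨a, c, c, c, c, a⟩ = c ∧
       phi0 l ⟨a, c, c, c, c, a⟩ = l - 2 * a - 3 * c ∧
       phi1 ⟨a, c, c, c, c, a⟩ = a ∧ phi2 ⟨a, c, c, c, c, a⟩ = c)) ∧
    Set.BijOn (fun b => (eps0 l b, eps1 b, eps2 b))
      {b : C6 | (memB b ∧ sB b ≤ l) ∧ eps0 l b + 2 * eps1 b + 3 * eps2 b = l}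
      {k : ℤ × ℤ × ℤ | 0 ≤ k.1 ∧ 0 ≤ k.2.1 ∧ 0 ≤ k.2.2 ∧
        k.1 + 2 * k.2.1 + 3 * k.2.2 = l} := by
  refine ⟨setEq l, fun a c _ _ _ => vals l a c, ?_, ?_, ?_⟩
  · intro b hb
    rw [setEq l] at hb
    obtain ⟨a, c, ha, hc, hle, rfl⟩ := hb
    obtain ⟨v0, v1, v2, -, -, -⟩ := vals l a c
    simp only [Set.mem_setOf_eq, v0, v1, v2]
    omega
  · intro b hb b' hb' heq
    rw [setEq l] at hb hb'
    obtain ⟨a, c, ha, hc, hle, rfl⟩ := hb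
    obtain ⟨a', c', ha', hc', hle', rfl⟩ := hb'
    obtain ⟨-, v1, v2, -, -, -⟩ := vals l a c
    obtain ⟨-, v1', v2', -, -, -⟩ := vals l a' c'
    simp only [Prod.mk.injEq, v1, v2, v1', v2'] at heq
    simp only [C6.mk.injEq, true_and, and_true]
    omega
  · rintro ⟨k0, k1, k2⟩ hk
    simp only [Set.mem_setOf_eq] at hk
    obtain ⟨h0, h1, h2, h3⟩ := hk
    refine ⟨⟨k1, k2, k2, k2, k2, k1⟩, ?_, ?_⟩
    · rw [setEq l]
      exact ⟨k1, k2, h1, h2, by omega, rfl⟩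
    · obtain ⟨v0, v1, v2, -, -, -⟩ := vals l k1 k2
      beta_reduce
      rw [v0, v1, v2]
      simp only [Prod.mk.injEq, and_true]
      omega

end
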